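/- Fix an integer m ≥ 1, positive reals τ and h_0, …, h_{m−1}, and reals a_i, b_i, c_i, f_i, p_i for i = 0, …, m−1, and reals g, G. Then a vector (u_0, …, u_m) ∈ ℝ^{m+1} satisfies the summation identity Σ_{i=0}^{m−1} h_i [ a_i ((u_{i+1}−u_i)/h_i)((η_{i+1}−η_i)/h_i) − b_i ((u_{i+1}−u_i)/h_i) η_i − c_i u_i η_i + f_i η_i + ((u_i − p_i)/τ) η_i ] + G η_m + g η_0 = 0 for ALL (η_0, …, η_m) ∈ ℝ^{m+1} if and only if (u_0, …, u_m) solves the system of m+1 linear equations: (i) [a_0 + h_0 b_0 − h_0² c_0 + h_0²/τ] u_0 − [a_0 + h_0 b_0] u_1 = (h_0²/τ) p_0 − h_0² f_0 − h_0 g; (ii) for each i = 1, …, m−1: −a_{i−1} h_i u_{i−1} + [a_{i−1} h_i + a_i h_{i−1} + b_i h_i h_{i−1} − c_i h_i² h_{i−1} + h_i² h_{i−1}/τ] u_i − [a_i h_{i−1} + b_i h_i h_{i−1}] u_{i+1} = −h_i² h_{i−1} f_i + (h_i² h_{i−1}/τ) p_i; (iii) −a_{m−1} u_{m−1} + a_{m−1}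 u_m = −h_{m−1} G. -/

import Mathlib

lemma tele' (T η : ℕ → ℝ) (n : ℕ) :
    ∑ i ∈ Finset.range (n+1), T i * (η (i+1) - η i)
      = T n * η (n+1) - T 0 * η 0 - ∑ i ∈ Finset.range n, (T (i+1) - T i) * η (i+1) := by
  induction n with
  | zero => simp [Finset.sum_range_one]; ring
  | succ k ih => rw [Finset.sum_range_succ, ih, Finset.sum_range_succ]; ring

lemma rep (n : ℕ) (τ : ℝ) (hτ : 0 < τ)
    (h a b c f p : ℕ → ℝ) (hh : ∀ i, i < n + 1 → 0 < h i)
    (g G : ℝ) (u : ℕ → ℝ) (η : ℕ → ℝ) :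
        (∑ i ∈ Finset.range (n+1),
            h i * (a i * ((u (i + 1) - u i) / h i) * ((η (i + 1) - η i) / h i)
              - b i * ((u (i + 1) - u i) / h i) * η i
              - c i * u i * η i
              + f i * η i
              + ((u i - p i) / τ) * η i))
          + G * η (n+1) + g * η 0
      = (-(a 0 * (u 1 - u 0) / h 0)
            + (h 0 * f 0 + h 0 * ((u 0 - p 0) / τ) - b 0 * (u 1 - u 0) - h 0 * (c 0 * u 0)) + g) * η 0
        + (∑ i ∈ Finset.range n,
            (a i * (u (i+1) - u i) / h i - a (i+1) * (u (i+2) - u (i+1)) / h (i+1)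
              + (h (i+1) * f (i+1) + h (i+1) * ((u (i+1) - p (i+1)) / τ)
                  - b (i+1) * (u (i+2) - u (i+1)) - h (i+1) * (c (i+1) * u (i+1)))) * η (i+1))
        + (a n * (u (n+1) - u n) / h n + G) * η (n+1) := by
  set T : ℕ → ℝ := fun i => a i * (u (i+1) - u i) / h i with hT
  set D : ℕ → ℝ := fun i => h i * f i + h i * ((u i - p i) / τ) - b i * (u (i+1) - u i) - h i * (c i * u i) with hD
  have step : ∑ i ∈ Finset.range (n+1),
      h i * (a i * ((u (i + 1) - u i) / h i) * ((η (i + 1) - η i) / h i)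
              - b i * ((u (i + 1) - u i) / h i) * η i
              - c i * u i * η i
              + f i * η i
              + ((u i - p i) / τ) * η i)
      = ∑ i ∈ Finset.range (n+1), (T i * (η (i+1) - η i) + D i * η i) := by
    refine Finset.sum_congr rfl fun i hi => ?_
    have hne : h i ≠ 0 := (hh i (Finset.mem_range.mp hi)).ne'
    have hτ' : τ ≠ 0 := hτ.ne'
    simp only [hT, hD]
    field_simp
    ring
  have gsum : ∑ i ∈ Finset.range n,
            (a i * (u (i+1) - u i) / h i - a (i+1) * (u (i+2) - u (i+1)) / h (i+1)
              + (h (i+1) * f (i+1) + h (i+1) * ((u (i+1) - p (i+1)) / τ)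
                  - b (i+1) * (u (i+2) - u (i+1)) - h (i+1) * (c (i+1) * u (i+1)))) * η (i+1)
      = ∑ i ∈ Finset.range n, (D (i+1) * η (i+1))
        - ∑ i ∈ Finset.range n, ((T (i+1) - T i) * η (i+1)) := by
    rw [← Finset.sum_sub_distrib]
    refine Finset.sum_congr rfl fun i _ => ?_
    simp only [hT, hD]
    show _ = (_ - b (i+1) * (u (i + 1 + 1) - u (i+1)) - _) * η (i+1) - _
    ring_nf
  rw [step, Finset.sum_add_distrib, tele', Finset.sum_range_succ' (fun i => D i * η i) n, gsum]
  simp only [hT, hD]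
  ring

/-- The summation identity (discrete weak formulation) holds for all test
vectors `η` iff the discrete state vector `u` solves the tridiagonal linear system. -/
theorem stmt_0 (m : ℕ) (hm : 1 ≤ m) (τ : ℝ) (hτ : 0 < τ)
    (h a b c f p : ℕ → ℝ) (hh : ∀ i, i < m → 0 < h i)
    (g G : ℝ) (u : ℕ → ℝ) :
    (∀ η : ℕ → ℝ,
        (∑ i ∈ Finset.range m,
            h i * (a i * ((u (i + 1) - u i) / h i) * ((η (i + 1) - η i) / h i)
              - b i * ((u (i + 1) - u i) / h i) * η i
              - c i * u i * η i
              + f i * η i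
              + ((u i - p i) / τ) * η i))
          + G * η m + g * η 0 = 0)
    ↔ ((a 0 + h 0 * b 0 - h 0 ^ 2 * c 0 + h 0 ^ 2 / τ) * u 0
          - (a 0 + h 0 * b 0) * u 1
          = (h 0 ^ 2 / τ) * p 0 - h 0 ^ 2 * f 0 - h 0 * g)
      ∧ (∀ i, 1 ≤ i → i ≤ m - 1 →
          -(a (i - 1) * h i) * u (i - 1)
            + (a (i - 1) * h i + a i * h (i - 1) + b i * h i * h (i - 1)
                - c i * h i ^ 2 * h (i - 1) + h i ^ 2 * h (i - 1) / τ) * u i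
            - (a i * h (i - 1) + b i * h i * h (i - 1)) * u (i + 1)
          = -(h i ^ 2 * h (i - 1)) * f i + (h i ^ 2 * h (i - 1) / τ) * p i)
      ∧ (-(a (m - 1)) * u (m - 1) + a (m - 1) * u m = -(h (m - 1)) * G) := by
  obtain ⟨n, rfl⟩ : ∃ n, m = n + 1 := ⟨m - 1, (Nat.succ_pred_eq_of_pos hm).symm⟩
  have hτ' : τ ≠ 0 := hτ.ne'
  have h0 : h 0 ≠ 0 := (hh 0 (Nat.succ_pos n)).ne'
  have hn : h n ≠ 0 := (hh n (Nat.lt_succ_self n)).ne'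
  simp only [Nat.add_sub_cancel]
  -- key algebraic identities for the three rows
  have key0 : h 0 * (-(a 0 * (u 1 - u 0) / h 0)
        + (h 0 * f 0 + h 0 * ((u 0 - p 0) / τ) - b 0 * (u 1 - u 0) - h 0 * (c 0 * u 0)) + g)
      = ((a 0 + h 0 * b 0 - h 0 ^ 2 * c 0 + h 0 ^ 2 / τ) * u 0
          - (a 0 + h 0 * b 0) * u 1)
        - ((h 0 ^ 2 / τ) * p 0 - h 0 ^ 2 * f 0 - h 0 * g) := by
    field_simp
    ring
  have keymid : ∀ j : ℕ, j < n →
      h (j+1) * h j * (a j * (u (j+1) - u j) / h j - a (j+1) * (u (j+2) - u (j+1)) / h (j+1)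
              + (h (j+1) * f (j+1) + h (j+1) * ((u (j+1) - p (j+1)) / τ)
                  - b (j+1) * (u (j+2) - u (j+1)) - h (j+1) * (c (j+1) * u (j+1))))
      = (-(a j * h (j+1)) * u j
            + (a j * h (j+1) + a (j+1) * h j + b (j+1) * h (j+1) * h j
                - c (j+1) * h (j+1) ^ 2 * h j + h (j+1) ^ 2 * h j / τ) * u (j+1)
            - (a (j+1) * h j + b (j+1) * h (j+1) * h j) * u (j+2))
        - (-(h (j+1) ^ 2 * h j) * f (j+1) + (h (j+1) ^ 2 * h j / τ) * p (j+1)) := by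
    intro j hj
    have hj1 : h (j+1) ≠ 0 := (hh (j+1) (by omega)).ne'
    have hj0 : h j ≠ 0 := (hh j (by omega)).ne'
    field_simp
    ring
  have keyn : h n * (a n * (u (n+1) - u n) / h n + G)
      = (-(a n) * u n + a n * u (n+1)) - (-(h n) * G) := by
    field_simp
    ring
  constructor
  · intro H
    have H' : ∀ η : ℕ → ℝ,
        (-(a 0 * (u 1 - u 0) / h 0)
            + (h 0 * f 0 + h 0 * ((u 0 - p 0) / τ) - b 0 * (u 1 - u 0) - h 0 * (c 0 * u 0)) + g) * η 0
        + (∑ i ∈ Finset.range n,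
            (a i * (u (i+1) - u i) / h i - a (i+1) * (u (i+2) - u (i+1)) / h (i+1)
              + (h (i+1) * f (i+1) + h (i+1) * ((u (i+1) - p (i+1)) / τ)
                  - b (i+1) * (u (i+2) - u (i+1)) - h (i+1) * (c (i+1) * u (i+1)))) * η (i+1))
        + (a n * (u (n+1) - u n) / h n + G) * η (n+1) = 0 :=
      fun η => (rep n τ hτ h a b c f p hh g G u η).symm.trans (H η)
    refine ⟨?_, ?_, ?_⟩
    · have h1 := H' (fun k => if k = 0 then 1 else 0)
      simp only [Nat.succ_ne_zero, if_false, if_true, mul_zero, mul_one,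
        Finset.sum_const_zero, add_zero] at h1
      have hc : h 0 * (-(a 0 * (u 1 - u 0) / h 0)
          + (h 0 * f 0 + h 0 * ((u 0 - p 0) / τ) - b 0 * (u 1 - u 0) - h 0 * (c 0 * u 0)) + g) = 0 := by
        rw [h1, mul_zero]
      rw [key0] at hc
      linarith
    · intro i hi1 hin
      obtain ⟨j, rfl⟩ : ∃ j, i = j + 1 := ⟨i - 1, (Nat.succ_pred_eq_of_pos hi1).symm⟩
      simp only [Nat.add_sub_cancel]
      have hjn : j < n := by omega
      have h2 := H' (fun k => if k = j + 1 then 1 else 0)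
      have hn_ne : n + 1 ≠ j + 1 := by omega
      have h0_ne : (0 : ℕ) ≠ j + 1 := by omega
      simp only [h0_ne, hn_ne, if_false, mul_zero, add_zero, zero_add, mul_ite, mul_one,
        add_left_inj, Finset.sum_ite_eq', Finset.mem_range, hjn, if_true] at h2
      have hc := keymid j hjn
      rw [h2, mul_zero] at hc
      have e2 : j + 1 + 1 = j + 2 := rfl
      rw [e2]
      linarith
    · have h3 := H' (fun k => if k = n + 1 then 1 else 0)
      have h0_ne : (0 : ℕ) ≠ n + 1 := by omega
      have hsum : ∀ i ∈ Finset.range n, (i : ℕ) + 1 ≠ n + 1 := by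
        intro i hi; have := Finset.mem_range.mp hi; omega
      simp only [h0_ne, if_false, mul_zero, add_zero, zero_add, if_true] at h3
      rw [Finset.sum_eq_zero (fun i hi => by rw [if_neg (hsum i hi), mul_zero])] at h3
      simp only [zero_add, mul_one] at h3
      have hc := keyn
      rw [h3, mul_zero] at hc
      linarith
  · rintro ⟨E0, Emid, En⟩ η
    rw [rep n τ hτ h a b c f p hh g G u]
    have c0 : (-(a 0 * (u 1 - u 0) / h 0)
          + (h 0 * f 0 + h 0 * ((u 0 - p 0) / τ) - b 0 * (u 1 - u 0) - h 0 * (c 0 * u 0)) + g) = 0 := by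
      have : h 0 * (-(a 0 * (u 1 - u 0) / h 0)
          + (h 0 * f 0 + h 0 * ((u 0 - p 0) / τ) - b 0 * (u 1 - u 0) - h 0 * (c 0 * u 0)) + g) = 0 := by
        rw [key0]; linarith
      exact (mul_eq_zero.mp this).resolve_left h0
    have cn : (a n * (u (n+1) - u n) / h n + G) = 0 := by
      have : h n * (a n * (u (n+1) - u n) / h n + G) = 0 := by
        rw [keyn]; linarith
      exact (mul_eq_zero.mp this).resolve_left hn
    have cmid : ∀ j ∈ Finset.range n,
        (a j * (u (j+1) - u j) / h j - a (j+1) * (u (j+2) - u (j+1)) / h (j+1)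
              + (h (j+1) * f (j+1) + h (j+1) * ((u (j+1) - p (j+1)) / τ)
                  - b (j+1) * (u (j+2) - u (j+1)) - h (j+1) * (c (j+1) * u (j+1)))) * η (j+1) = 0 := by
      intro j hj
      have hjn := Finset.mem_range.mp hj
      have hE := Emid (j+1) (by omega) (by omega)
      simp only [Nat.add_sub_cancel] at hE
      have hj1 : h (j+1) ≠ 0 := (hh (j+1) (by omega)).ne'
      have hj0 : h j ≠ 0 := (hh j (by omega)).ne'
      have : h (j+1) * h j * (a j * (u (j+1) - u j) / h j - a (j+1) * (u (j+2) - u (j+1)) / h (j+1)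
              + (h (j+1) * f (j+1) + h (j+1) * ((u (j+1) - p (j+1)) / τ)
                  - b (j+1) * (u (j+2) - u (j+1)) - h (j+1) * (c (j+1) * u (j+1)))) = 0 := by
        rw [keymid j hjn]; linarith
      rcases mul_eq_zero.mp this with h' | h'
      · exact absurd h' (mul_ne_zero hj1 hj0)
      · rw [h', zero_mul]
    rw [c0, cn, Finset.sum_eq_zero cmid]
    ring
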